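/- Let A and B be finite nonempty types, let e₀ and e₁ be the standard basis vectors of ℂ^A at two distinct elements 0 and 1 of A, and let U be a unitary matrix in Matrix.unitaryGroup (A × B) ℂ. For b ∈ {0,1} and φ : B → ℂ write ψ_b(φ) = U.mulVec (e_b ⊗ φ). If for every vector φ : B → ℂ the partial traces over A agree, ptrA (ψ₀ φ) = ptrA (ψ₁ φ), then there exists a unitary matrix S ∈ Matrix.unitaryGroup A ℂ such that for every φ : B → ℂ, (S ⊗ I).mulVec (ψ₀ φ) = ψ₁ φ. (In other words, if a quantum bit commitment scheme is perfectly concealing even for an arbitrary, possibly unknown, receiver state φ — the non-static case — then the committer can convert the commitment of 0 into the commitment of 1 by a local unitary, so the scheme is not binding.) -/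

import Mathlib

open scoped ComplexOrder
open Matrix

noncomputable section

/-- Partial trace over `A` of the outer product `|ψ⟩⟨ψ|`:
`(ptrA ψ) j q = ∑ i, ψ (i, j) * conj (ψ (i, q))`. -/
def ptrA {A B : Type*} [Fintype A] (ψ : A × B → ℂ) : Matrix B B ℂ :=
  fun j q => ∑ i : A, ψ (i, j) * (starRingEnd ℂ) (ψ (i, q))

/-- The Kronecker product `S ⊗ I` with the identity on `B`, as a matrix on `A × B`. -/
def kronId {A B : Type*} [DecidableEq B] (S : Matrix A A ℂ) : Matrix (A × B) (A × B) ℂ :=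
  Matrix.kroneckerMap (· * ·) S (1 : Matrix B B ℂ)

/-- `ptrA ψ` is a Gram matrix, hence positive semidefinite. -/
lemma ptrA_posSemidef {A B : Type*} [Fintype A] [Fintype B] (ψ : A × B → ℂ) :
    (ptrA ψ).PosSemidef := by
  set V : Matrix A B ℂ := Matrix.of fun i j => (starRingEnd ℂ) (ψ (i, j)) with hV
  have h := Matrix.posSemidef_conjTranspose_mul_self V
  have heq : ptrA ψ = Vᴴ * V := by
    ext j q
    simp [Matrix.mul_apply, Matrix.conjTranspose_apply, ptrA, hV, mul_comm]
  rw [heq]; exact h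

/-- The positive semidefinite square root of a positive semidefinite matrix
(the former Mathlib `Matrix.PosSemidef.sqrt`, removed upstream). -/
def Matrix.PosSemidef.sqrt {n : Type*} [Fintype n] [DecidableEq n] {A : Matrix n n ℂ}
    (hA : A.PosSemidef) : Matrix n n ℂ :=
  hA.1.eigenvectorUnitary.1 * diagonal ((↑) ∘ (√·) ∘ hA.1.eigenvalues) *
    (star hA.1.eigenvectorUnitary : Matrix n n ℂ)

lemma Matrix.PosSemidef.posSemidef_sqrt {n : Type*} [Fintype n] [DecidableEq n]
    {A : Matrix n n ℂ} (hA : A.PosSemidef) : hA.sqrt.PosSemidef := by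
  have hD : (diagonal ((↑) ∘ (√·) ∘ hA.1.eigenvalues : n → ℂ)).PosSemidef := by
    rw [posSemidef_diagonal_iff]
    intro i
    simp only [Function.comp_apply]
    exact_mod_cast Real.sqrt_nonneg _
  have h := hD.mul_mul_conjTranspose_same (hA.1.eigenvectorUnitary.1)
  unfold Matrix.PosSemidef.sqrt
  simpa [Matrix.star_eq_conjTranspose] using h

lemma sqrt_mul_mul_sqrt_posSemidef {B : Type*} [Fintype B] [DecidableEq B]
    {ρ σ : Matrix B B ℂ} (hρ : ρ.PosSemidef) (hσ : σ.PosSemidef) :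
    (hρ.sqrt * σ * hρ.sqrt).PosSemidef := by
  have h := hσ.mul_mul_conjTranspose_same hρ.sqrt
  rwa [hρ.posSemidef_sqrt.isHermitian.eq] at h

/-- The fidelity `F(ρ, σ) = tr √(√ρ * σ * √ρ)` of two positive semidefinite matrices. -/
def fidelity {B : Type*} [Fintype B] [DecidableEq B] {ρ σ : Matrix B B ℂ}
    (hρ : ρ.PosSemidef) (hσ : σ.PosSemidef) : ℝ :=
  ((sqrt_mul_mul_sqrt_posSemidef hρ hσ).sqrt.trace).re

open scoped ComplexConjugate InnerProductSpace


/-- The linear map on Euclidean spaces given by a matrix (column map). -/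
def colMap {A ι : Type*} [Fintype ι] (V : Matrix A ι ℂ) :
    EuclideanSpace ℂ ι →ₗ[ℂ] EuclideanSpace ℂ A where
  toFun x := WithLp.toLp 2 (fun i => ∑ p, V i p * x p)
  map_add' x y := by
    ext i
    simp [mul_add, Finset.sum_add_distrib]
  map_smul' c x := by
    ext i
    simp [Finset.mul_sum, mul_left_comm]

lemma euclid_sum_apply {A β : Type*} [Fintype β] (f : β → EuclideanSpace ℂ A) (i : A) :
    (∑ x, f x) i = ∑ x, f x i :=
  by rw [WithLp.ofLp_sum, Finset.sum_apply]

lemma exists_unitary_of_gram_eq {A ι : Type*} [Fintype A] [DecidableEq A]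
    [Fintype ι] [DecidableEq ι]
    (V₀ V₁ : Matrix A ι ℂ)
    (hG : ∀ p q, ∑ i, conj (V₀ i p) * V₀ i q = ∑ i, conj (V₁ i p) * V₁ i q) :
    ∃ S ∈ Matrix.unitaryGroup A ℂ, ∀ x : ι → ℂ, S.mulVec (V₀.mulVec x) = V₁.mulVec x := by
  classical
  set T₀ := colMap V₀ with hT₀
  set T₁ := colMap V₁ with hT₁
  have hVexpand : ∀ (V : Matrix A ι ℂ) (x y : ι → ℂ),
      (∑ i, conj (∑ p, V i p * x p) * (∑ q, V i q * y q)) =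
        ∑ p, ∑ q, conj (x p) * y q * ∑ i, conj (V i p) * V i q := by
    intro V x y
    have step : ∀ i, conj (∑ p, V i p * x p) * (∑ q, V i q * y q) =
        ∑ p, ∑ q, conj (x p) * y q * (conj (V i p) * V i q) := by
      intro i
      rw [map_sum, Finset.sum_mul]
      refine Finset.sum_congr rfl fun p _ => ?_
      rw [Finset.mul_sum]
      refine Finset.sum_congr rfl fun q _ => ?_
      rw [_root_.map_mul]
      ring
    calc (∑ i, conj (∑ p, V i p * x p) * (∑ q, V i q * y q))
        = ∑ i, ∑ p, ∑ q, conj (x p) * y q * (conj (V i p) * V i q) :=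
          Finset.sum_congr rfl fun i _ => step i
      _ = ∑ p, ∑ i, ∑ q, conj (x p) * y q * (conj (V i p) * V i q) := Finset.sum_comm
      _ = ∑ p, ∑ q, ∑ i, conj (x p) * y q * (conj (V i p) * V i q) :=
          Finset.sum_congr rfl fun p _ => Finset.sum_comm
      _ = ∑ p, ∑ q, conj (x p) * y q * ∑ i, conj (V i p) * V i q := by
          refine Finset.sum_congr rfl fun p _ => Finset.sum_congr rfl fun q _ => ?_
          rw [Finset.mul_sum]
  have hinner : ∀ x y : EuclideanSpace ℂ ι, ⟪T₀ x, T₀ y⟫_ℂ = ⟪T₁ x, T₁ y⟫_ℂ := by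
    intro x y
    have h0 : ⟪T₀ x, T₀ y⟫_ℂ = ∑ i, conj ((T₀ x) i) * ((T₀ y) i) := by
      simp [PiLp.inner_apply, RCLike.inner_apply]
      exact Finset.sum_congr rfl fun _ _ => mul_comm _ _
    have h1 : ⟪T₁ x, T₁ y⟫_ℂ = ∑ i, conj ((T₁ x) i) * ((T₁ y) i) := by
      simp [PiLp.inner_apply, RCLike.inner_apply]
      exact Finset.sum_congr rfl fun _ _ => mul_comm _ _
    rw [h0, h1]
    show (∑ i, conj (∑ p, V₀ i p * x p) * (∑ q, V₀ i q * y q)) =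
      ∑ i, conj (∑ p, V₁ i p * x p) * (∑ q, V₁ i q * y q)
    rw [hVexpand, hVexpand]
    exact Finset.sum_congr rfl fun p _ => Finset.sum_congr rfl fun q _ => by rw [hG]
  have hnorm : ∀ x, ‖T₀ x‖ = ‖T₁ x‖ := by
    intro x
    rw [@norm_eq_sqrt_re_inner ℂ, @norm_eq_sqrt_re_inner ℂ, hinner]
  have hker : LinearMap.ker T₀ ≤ LinearMap.ker T₁ := by
    intro x hx
    rw [LinearMap.mem_ker] at hx ⊢
    have := hnorm x
    rw [hx, norm_zero] at this
    exact norm_eq_zero.mp this.symm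
  let L' : (EuclideanSpace ℂ ι ⧸ LinearMap.ker T₀) →ₗ[ℂ] EuclideanSpace ℂ A :=
    Submodule.liftQ (LinearMap.ker T₀) T₁ hker
  let e := T₀.quotKerEquivRange
  let L : LinearMap.range T₀ →ₗ[ℂ] EuclideanSpace ℂ A :=
    L'.comp (e.symm : LinearMap.range T₀ →ₗ[ℂ] _)
  have hL : ∀ x : EuclideanSpace ℂ ι,
      L ⟨T₀ x, LinearMap.mem_range_self _ x⟩ = T₁ x := by
    intro x
    have he : e.symm ⟨T₀ x, LinearMap.mem_range_self _ x⟩ =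
        Submodule.Quotient.mk x := by
      apply e.injective
      rw [LinearEquiv.apply_symm_apply]
      exact Subtype.ext (T₀.quotKerEquivRange_apply_mk x).symm
    show L' (e.symm ⟨T₀ x, LinearMap.mem_range_self _ x⟩) = T₁ x
    rw [he]
    exact Submodule.liftQ_apply _ _ _
  have hLnorm : ∀ v : LinearMap.range T₀, ‖L v‖ = ‖v‖ := by
    rintro ⟨v, x, rfl⟩
    rw [hL x]
    exact (hnorm x).symm
  let Liso : LinearMap.range T₀ →ₗᵢ[ℂ] EuclideanSpace ℂ A := ⟨L, hLnorm⟩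
  let g := Liso.extend
  have hg : ∀ x : EuclideanSpace ℂ ι, g (T₀ x) = T₁ x := by
    intro x
    have := Liso.extend_apply ⟨T₀ x, LinearMap.mem_range_self _ x⟩
    rw [this]
    exact hL x
  set S : Matrix A A ℂ := Matrix.of (fun i x => g (EuclideanSpace.single x 1) i) with hS
  have hScol : ∀ w : EuclideanSpace ℂ A, S.mulVec w.ofLp = (g w).ofLp := by
    intro w
    have hw : (w : EuclideanSpace ℂ A) = ∑ x, w x • EuclideanSpace.single x 1 := by
      ext j
      rw [euclid_sum_apply]
      simp [EuclideanSpace.single_apply]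
    funext i
    rw [show g w = g (∑ x, w x • EuclideanSpace.single x 1) by rw [← hw]]
    rw [map_sum, euclid_sum_apply]
    simp only [PiLp.smul_apply]
    have : ∀ x : A, g (w x • EuclideanSpace.single x 1) i
        = w x * g (EuclideanSpace.single x 1) i := by
      intro x
      rw [_root_.map_smul]
      rfl
    rw [Finset.sum_congr rfl fun x _ => this x]
    simp [Matrix.mulVec, dotProduct, hS, mul_comm]
  refine ⟨S, ?_, ?_⟩
  · rw [Matrix.mem_unitaryGroup_iff']
    ext x y
    have h1 : (star S * S) x y = ∑ i, conj (S i x) * S i y := by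
      simp [Matrix.mul_apply, Matrix.star_apply]
    have h2 : (∑ i, conj (S i x) * S i y) =
        ⟪g (EuclideanSpace.single x 1), g (EuclideanSpace.single y 1)⟫_ℂ := by
      rw [PiLp.inner_apply]
      simp only [RCLike.inner_apply]
      exact Finset.sum_congr rfl fun _ _ => mul_comm _ _
    rw [h1, h2, g.inner_map_map]
    simp [EuclideanSpace.inner_single_left, EuclideanSpace.single_apply,
      Matrix.one_apply, eq_comm]
  · intro x
    have h0 : V₀.mulVec x = (T₀ (WithLp.toLp 2 x)).ofLp := by
      funext i; simp [Matrix.mulVec, dotProduct, colMap, hT₀]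
    have h1 : V₁.mulVec x = (T₁ (WithLp.toLp 2 x)).ofLp := by
      funext i; simp [Matrix.mulVec, dotProduct, colMap, hT₁]
    rw [h0, h1, hScol, hg]

/-- **MLC no-go theorem for non-static QBC.** If the commitment is perfectly concealing
for every receiver state `φ`, then a local unitary `S` on `A` converts the commitment of `0`
into the commitment of `1` for every `φ`, i.e. the scheme is not binding. -/
theorem nonstatic_concealing_not_binding
    {A B : Type*} [Fintype A] [Fintype B] [DecidableEq A] [DecidableEq B]
    [Nonempty A] [Nonempty B]
    (z o : A) (hzo : z ≠ o)
    (e₀ e₁ : A → ℂ)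
    (he₀ : e₀ = fun i => if i = z then 1 else 0)
    (he₁ : e₁ = fun i => if i = o then 1 else 0)
    (U : Matrix.unitaryGroup (A × B) ℂ)
    (ψ₀ ψ₁ : (B → ℂ) → (A × B → ℂ))
    (hψ₀ : ∀ φ : B → ℂ, ψ₀ φ = (U : Matrix (A × B) (A × B) ℂ).mulVec (fun p => e₀ p.1 * φ p.2))
    (hψ₁ : ∀ φ : B → ℂ, ψ₁ φ = (U : Matrix (A × B) (A × B) ℂ).mulVec (fun p => e₁ p.1 * φ p.2))
    (hconceal : ∀ φ : B → ℂ, ptrA (ψ₀ φ) = ptrA (ψ₁ φ)) :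
    ∃ S ∈ Matrix.unitaryGroup A ℂ, ∀ φ : B → ℂ, (kronId S).mulVec (ψ₀ φ) = ψ₁ φ := by
  classical
  set δ : B → (B → ℂ) := fun k => Pi.single k 1 with hδ
  -- linearity of ψ in φ, pointwise
  have hlin : ∀ (ψ : (B → ℂ) → (A × B → ℂ)) (e : A → ℂ),
      (∀ φ, ψ φ = (U : Matrix (A × B) (A × B) ℂ).mulVec (fun p => e p.1 * φ p.2)) →
      ∀ (φ : B → ℂ) (x : A) (j : B), ψ φ (x, j) = ∑ k, φ k * ψ (δ k) (x, j) := by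
    intro ψ e hψe φ x j
    simp only [hψe, Matrix.mulVec, dotProduct]
    have hterm : ∀ p : A × B,
        ∑ k, φ k * ((U : Matrix (A × B) (A × B) ℂ) (x, j) p * (e p.1 * δ k p.2)) =
          (U : Matrix (A × B) (A × B) ℂ) (x, j) p * (e p.1 * φ p.2) := by
      intro p
      simp [hδ, Pi.single_apply, mul_ite, Finset.sum_ite_eq', mul_comm, mul_left_comm, mul_assoc]
    simp only [Finset.mul_sum]
    rw [Finset.sum_comm]
    exact (Finset.sum_congr rfl fun p _ => hterm p).symm
  -- additivity pointwise
  have hadd : ∀ (ψ : (B → ℂ) → (A × B → ℂ)) (e : A → ℂ),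
      (∀ φ, ψ φ = (U : Matrix (A × B) (A × B) ℂ).mulVec (fun p => e p.1 * φ p.2)) →
      ∀ (k k' : B) (c : ℂ) (i : A) (m : B),
        ψ (fun t => δ k t + c * δ k' t) (i, m) = ψ (δ k) (i, m) + c * ψ (δ k') (i, m) := by
    intro ψ e hψe k k' c i m
    simp only [hψe, Matrix.mulVec, dotProduct]
    rw [Finset.mul_sum, ← Finset.sum_add_distrib]
    refine Finset.sum_congr rfl fun p _ => ?_
    ring
  -- polarization
  have hkey : ∀ (j q k k' : B),
      ∑ i, ψ₀ (δ k) (i, j) * conj (ψ₀ (δ k') (i, q)) =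
        ∑ i, ψ₁ (δ k) (i, j) * conj (ψ₁ (δ k') (i, q)) := by
    intro j q k k'
    have hd : ∀ φ : B → ℂ,
        ∑ i, ψ₀ φ (i, j) * conj (ψ₀ φ (i, q)) = ∑ i, ψ₁ φ (i, j) * conj (ψ₁ φ (i, q)) :=
      fun φ => congrFun (congrFun (hconceal φ) j) q
    set A00 := ∑ i, ψ₀ (δ k) (i, j) * conj (ψ₀ (δ k) (i, q)) with hA00
    set A01 := ∑ i, ψ₀ (δ k) (i, j) * conj (ψ₀ (δ k') (i, q)) with hA01
    set A10 := ∑ i, ψ₀ (δ k') (i, j) * conj (ψ₀ (δ k) (i, q)) with hA10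
    set A11 := ∑ i, ψ₀ (δ k') (i, j) * conj (ψ₀ (δ k') (i, q)) with hA11
    set B00 := ∑ i, ψ₁ (δ k) (i, j) * conj (ψ₁ (δ k) (i, q)) with hB00
    set B01 := ∑ i, ψ₁ (δ k) (i, j) * conj (ψ₁ (δ k') (i, q)) with hB01
    set B10 := ∑ i, ψ₁ (δ k') (i, j) * conj (ψ₁ (δ k) (i, q)) with hB10
    set B11 := ∑ i, ψ₁ (δ k') (i, j) * conj (ψ₁ (δ k') (i, q)) with hB11
    have expand : ∀ (f g f' g' : A → ℂ) (c : ℂ),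
        ∑ i, (f i + c * g i) * conj (f' i + c * g' i)
          = (∑ i, f i * conj (f' i)) + conj c * (∑ i, f i * conj (g' i))
            + (c * (∑ i, g i * conj (f' i)) + c * conj c * (∑ i, g i * conj (g' i))) := by
      intro f g f' g' c
      simp only [Finset.mul_sum]
      rw [← Finset.sum_add_distrib, ← Finset.sum_add_distrib, ← Finset.sum_add_distrib]
      refine Finset.sum_congr rfl fun i _ => ?_
      rw [map_add, _root_.map_mul]
      ring
    have hexp : ∀ c : ℂ,
        A00 + conj c * A01 + (c * A10 + c * conj c * A11)
          = B00 + conj c * B01 + (c * B10 + c * conj c * B11) := by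
      intro c
      have h := hd (fun t => δ k t + c * δ k' t)
      have h0 : ∑ i, ψ₀ (fun t => δ k t + c * δ k' t) (i, j) *
            conj (ψ₀ (fun t => δ k t + c * δ k' t) (i, q))
          = A00 + conj c * A01 + (c * A10 + c * conj c * A11) := by
        rw [Finset.sum_congr rfl fun i _ => by
          rw [hadd ψ₀ e₀ hψ₀ k k' c i j, hadd ψ₀ e₀ hψ₀ k k' c i q]]
        exact expand _ _ _ _ c
      have h1 : ∑ i, ψ₁ (fun t => δ k t + c * δ k' t) (i, j) *
            conj (ψ₁ (fun t => δ k t + c * δ k' t) (i, q))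
          = B00 + conj c * B01 + (c * B10 + c * conj c * B11) := by
        rw [Finset.sum_congr rfl fun i _ => by
          rw [hadd ψ₁ e₁ hψ₁ k k' c i j, hadd ψ₁ e₁ hψ₁ k k' c i q]]
        exact expand _ _ _ _ c
      rw [← h0, ← h1]
      exact h
    have d00 : A00 = B00 := hd (δ k)
    have d11 : A11 = B11 := hd (δ k')
    have e1 := hexp 1
    simp only [_root_.map_one, one_mul, mul_one] at e1
    have s1 : A01 + A10 = B01 + B10 := by linear_combination e1 - d00 - d11
    have eI := hexp Complex.I
    rw [Complex.conj_I] at eI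
    have hII : Complex.I * -Complex.I = 1 := by
      rw [mul_neg, Complex.I_mul_I, neg_neg]
    rw [hII, one_mul] at eI
    have s2' : -Complex.I * A01 + Complex.I * A10 = -Complex.I * B01 + Complex.I * B10 := by
      linear_combination eI - d00 - d11
    have s2 : A01 - A10 = B01 - B10 := by
      linear_combination Complex.I * s2' - (A10 - A01 - B10 + B01) * Complex.I_mul_I
    linear_combination ((1:ℂ)/2) * s1 + ((1:ℂ)/2) * s2
  -- Gram matrices
  set V₀ : Matrix A (B × B) ℂ := Matrix.of (fun i p => ψ₀ (δ p.2) (i, p.1)) with hV₀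
  set V₁ : Matrix A (B × B) ℂ := Matrix.of (fun i p => ψ₁ (δ p.2) (i, p.1)) with hV₁
  have hGram : ∀ p q : B × B,
      ∑ i, conj (V₀ i p) * V₀ i q = ∑ i, conj (V₁ i p) * V₁ i q := by
    intro p q
    have h := congrArg conj (hkey p.1 q.1 p.2 q.2)
    simp only [map_sum, _root_.map_mul, Complex.conj_conj] at h
    exact h
  obtain ⟨S, hSU, hSmul⟩ := exists_unitary_of_gram_eq V₀ V₁ hGram
  refine ⟨S, hSU, ?_⟩
  intro φ
  funext pij
  obtain ⟨i, j⟩ := pij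
  set w : B × B → ℂ := fun p => if p.1 = j then φ p.2 else 0 with hw
  have h₀ : V₀.mulVec w = fun x => ψ₀ φ (x, j) := by
    funext x
    rw [hlin ψ₀ e₀ hψ₀ φ x j]
    simp [Matrix.mulVec, dotProduct, Fintype.sum_prod_type, hw, hV₀,
      mul_ite, mul_comm, Finset.sum_ite_eq]
  have h₁ : V₁.mulVec w = fun x => ψ₁ φ (x, j) := by
    funext x
    rw [hlin ψ₁ e₁ hψ₁ φ x j]
    simp [Matrix.mulVec, dotProduct, Fintype.sum_prod_type, hw, hV₁,
      mul_ite, mul_comm, Finset.sum_ite_eq]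
  have hLHS : (kronId S).mulVec (ψ₀ φ) (i, j) = ∑ x, S i x * ψ₀ φ (x, j) := by
    simp [kronId, Matrix.mulVec, dotProduct, Fintype.sum_prod_type,
      Matrix.kroneckerMap_apply, Matrix.one_apply, mul_ite, Finset.sum_ite_eq,
      mul_assoc]
  rw [hLHS]
  have := congrFun (hSmul w) i
  rw [h₀, h₁] at this
  calc ∑ x, S i x * ψ₀ φ (x, j)
      = S.mulVec (fun x => ψ₀ φ (x, j)) i := by
        simp [Matrix.mulVec, dotProduct]
    _ = ψ₁ φ (i, j) := this
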